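/- Polynomial-size domain property over expanding domains: let φ be a one-variable first-order modal formula with counting quantifiers, and set n = |sub(φ)|, m = md(φ), C = cpt(φ). If φ is satisfiable with respect to QK^exp, then φ is satisfiable in an expanding domain model M = (W,R,D,d,I) whose frame (W,R) is an irreflexive intransitive tree of depth ≤ m and in which |d(w)| ≤ n·(m+1)·(C+1) + 1 for every w ∈ W (a bound polynomial in n, m, and C). -/

import Mathlib

/-! Syntax of one-variable first-order modal formulas with counting quantifiers:
    φ ::= P(x) | ¬φ | (φ∧φ) | ◇φ | ∃[≤c]x φ. -/

inductive Fml : Type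
  | atom : ℕ → Fml
  | neg : Fml → Fml
  | conj : Fml → Fml → Fml
  | dia : Fml → Fml
  | countLe : ℕ → Fml → Fml
deriving DecidableEq

namespace Fml

/-- Subformulas. -/
def sub : Fml → Finset Fml
  | atom n => {atom n}
  | neg ψ => insert (neg ψ) ψ.sub
  | conj ψ χ => insert (conj ψ χ) (ψ.sub ∪ χ.sub)
  | dia ψ => insert (dia ψ) ψ.sub
  | countLe c ψ => insert (countLe c ψ) ψ.sub

/-- Modal depth. -/
def md : Fml → ℕ
  | atom _ => 0
  | neg ψ => ψ.md
  | conj ψ χ => max ψ.md χ.md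
  | dia ψ => ψ.md + 1
  | countLe _ ψ => ψ.md

/-- Capacity: the largest counting-quantifier subscript (0 if none). -/
def cpt : Fml → ℕ
  | atom _ => 0
  | neg ψ => ψ.cpt
  | conj ψ χ => max ψ.cpt χ.cpt
  | dia ψ => ψ.cpt
  | countLe c ψ => max c ψ.cpt

/-- Length of the formula as a string, counting subscripts written in binary. -/
def len : Fml → ℕ
  | atom _ => 1
  | neg ψ => ψ.len + 1
  | conj ψ χ => ψ.len + χ.len + 1
  | dia ψ => ψ.len + 1
  | countLe c ψ => ψ.len + Nat.size c + 1

/-- Predicate symbols occurring in a formula. -/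
def preds : Fml → Finset ℕ
  | atom n => {n}
  | neg ψ => ψ.preds
  | conj ψ χ => ψ.preds ∪ χ.preds
  | dia ψ => ψ.preds
  | countLe _ ψ => ψ.preds

def imp (ψ χ : Fml) : Fml := neg (conj ψ (neg χ))
def or (ψ χ : Fml) : Fml := neg (conj (neg ψ) (neg χ))
def iff (ψ χ : Fml) : Fml := conj (ψ.imp χ) (χ.imp ψ)
def box (ψ : Fml) : Fml := neg (dia (neg ψ))
/-- `∃x ψ := ¬∃[≤0]x ψ`. -/
def ex (ψ : Fml) : Fml := neg (countLe 0 ψ)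
/-- `∀x ψ := ∃[≤0]x ¬ψ`. -/
def fal (ψ : Fml) : Fml := countLe 0 (neg ψ)
/-- A tautology. -/
def top : Fml := neg (conj (atom 0) (neg (atom 0)))

/-- `boxIter n ψ` is `□^n ψ`. -/
def boxIter : ℕ → Fml → Fml
  | 0, ψ => ψ
  | n+1, ψ => (boxIter n ψ).box

/-- `boxLe m ψ` is `⋀_{k=0}^{m} □^k ψ`. -/
def boxLe : ℕ → Fml → Fml
  | 0, ψ => ψ
  | n+1, ψ => conj (boxLe n ψ) (boxIter (n+1) ψ)

end Fml

/-- A first-order Kripke model `M = (W,R,D,d,I)` (unary predicates suffice for the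
one-variable fragment). -/
structure KModel where
  W : Type
  R : W → W → Prop
  D : Type
  Dne : Nonempty D
  dom : W → Set D
  domNe : ∀ w, (dom w).Nonempty
  I : W → ℕ → Set D
  Isub : ∀ w p, I w p ⊆ dom w

/-- Satisfaction `M,w ⊨^a φ`. -/
def KModel.sat (M : KModel) : Fml → M.W → M.D → Prop
  | .atom p, w, a => a ∈ M.I w p
  | .neg ψ, w, a => ¬ M.sat ψ w a
  | .conj ψ χ, w, a => M.sat ψ w a ∧ M.sat χ w a
  | .dia ψ, w, a => ∃ v, M.R w v ∧ M.sat ψ v a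
  | .countLe c ψ, w, _ => {b | b ∈ M.dom w ∧ M.sat ψ w b}.encard ≤ (c : ℕ∞)

def KModel.constDom (M : KModel) : Prop := ∀ u v, M.dom u = M.dom v
def KModel.expDom (M : KModel) : Prop := ∀ u v, M.R u v → M.dom u ⊆ M.dom v
def KModel.decDom (M : KModel) : Prop := ∀ u v, M.R u v → M.dom v ⊆ M.dom u

/-- Satisfiability with respect to QK (constant domains). -/
def satQK (φ : Fml) : Prop :=
  ∃ M : KModel, M.constDom ∧ ∃ w a, a ∈ M.dom w ∧ M.sat φ w a

/-- Satisfiability with respect to QK^exp (expanding domains). -/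
def satQKexp (φ : Fml) : Prop :=
  ∃ M : KModel, M.expDom ∧ ∃ w a, a ∈ M.dom w ∧ M.sat φ w a

/-- Satisfiability with respect to QK^dec (decreasing domains). -/
def satQKdec (φ : Fml) : Prop :=
  ∃ M : KModel, M.decDom ∧ ∃ w a, a ∈ M.dom w ∧ M.sat φ w a

/-- `R` is the immediate-successor (parent–child) relation of a rooted irreflexive
intransitive tree of depth ≤ m with root `r`. -/
def IsTreeOfDepth {W : Type} (R : W → W → Prop) (r : W) (m : ℕ) : Prop :=
  ∃ depth : W → ℕ,
    depth r = 0 ∧ (∀ w, depth w ≤ m) ∧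
    (∀ u v, R u v → depth v = depth u + 1) ∧
    (∀ v, v ≠ r → ∃! u, R u v) ∧
    (∀ v, Relation.ReflTransGen R r v)


/-! ### Auxiliary lemmas for the proof of `stmt_9` -/

namespace Stmt9Aux

open Relation

lemma mem_sub_self : ∀ φ : Fml, φ ∈ φ.sub := by
  intro φ; cases φ <;> simp [Fml.sub]

lemma sub_subset : ∀ φ : Fml, ∀ {ψ : Fml}, ψ ∈ φ.sub → ψ.sub ⊆ φ.sub := by
  intro φ
  induction φ with
  | atom n =>
      intro ψ h
      simp only [Fml.sub, Finset.mem_singleton] at h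
      subst h; exact Finset.Subset.refl _
  | neg χ ih =>
      intro ψ h
      rcases Finset.mem_insert.mp h with h | h
      · subst h; exact Finset.Subset.refl _
      · exact (ih h).trans (Finset.subset_insert _ _)
  | conj χ₁ χ₂ ih₁ ih₂ =>
      intro ψ h
      rcases Finset.mem_insert.mp h with h | h
      · subst h; exact Finset.Subset.refl _
      · rcases Finset.mem_union.mp h with h | h
        · exact (ih₁ h).trans (Finset.subset_union_left.trans (Finset.subset_insert _ _))
        · exact (ih₂ h).trans (Finset.subset_union_right.trans (Finset.subset_insert _ _))
  | dia χ ih =>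
      intro ψ h
      rcases Finset.mem_insert.mp h with h | h
      · subst h; exact Finset.Subset.refl _
      · exact (ih h).trans (Finset.subset_insert _ _)
  | countLe c χ ih =>
      intro ψ h
      rcases Finset.mem_insert.mp h with h | h
      · subst h; exact Finset.Subset.refl _
      · exact (ih h).trans (Finset.subset_insert _ _)

lemma cpt_le_of_mem_sub : ∀ φ : Fml, ∀ {ψ : Fml}, ψ ∈ φ.sub → ψ.cpt ≤ φ.cpt := by
  intro φ
  induction φ with
  | atom n =>
      intro ψ h
      simp only [Fml.sub, Finset.mem_singleton] at h
      subst h; exact le_refl _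
  | neg χ ih =>
      intro ψ h
      rcases Finset.mem_insert.mp h with h | h
      · subst h; exact le_refl _
      · exact (ih h).trans (by simp [Fml.cpt])
  | conj χ₁ χ₂ ih₁ ih₂ =>
      intro ψ h
      rcases Finset.mem_insert.mp h with h | h
      · subst h; exact le_refl _
      · rcases Finset.mem_union.mp h with h | h
        · exact (ih₁ h).trans (le_max_left _ _)
        · exact (ih₂ h).trans (le_max_right _ _)
  | dia χ ih =>
      intro ψ h
      rcases Finset.mem_insert.mp h with h | h
      · subst h; exact le_refl _
      · exact ih h
  | countLe c χ ih =>
      intro ψ h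
      rcases Finset.mem_insert.mp h with h | h
      · subst h; exact le_refl _
      · exact (ih h).trans (le_max_right _ _)

/-- Generic cardinality bound for a finite (Finset-indexed) union. -/
lemma encard_finset_biUnion_le {ι α : Type*} (s : Finset ι) (f : ι → Set α) (c : ℕ∞)
    (h : ∀ i ∈ s, (f i).encard ≤ c) :
    (⋃ i ∈ s, f i).encard ≤ (s.card : ℕ∞) * c := by
  classical
  induction s using Finset.induction_on with
  | empty => simp
  | @insert a s ha ih =>
      rw [Finset.set_biUnion_insert]
      calc (f a ∪ ⋃ i ∈ s, f i).encard
          ≤ (f a).encard + (⋃ i ∈ s, f i).encard := Set.encard_union_le _ _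
        _ ≤ c + (s.card : ℕ∞) * c :=
            add_le_add (h a (by simp)) (ih (fun i hi => h i (by simp [hi])))
        _ = ((s.card : ℕ∞) + 1) * c := by ring
        _ = ((insert a s).card : ℕ∞) * c := by
            rw [Finset.card_insert_of_notMem ha]; push_cast; ring

lemma encard_iUnion_fin_le {α : Type*} {k : ℕ} (f : Fin k → Set α) (c : ℕ∞)
    (h : ∀ i, (f i).encard ≤ c) : (⋃ i, f i).encard ≤ (k : ℕ∞) * c := by
  have h1 : (⋃ i, f i) = ⋃ i ∈ (Finset.univ : Finset (Fin k)), f i := by simp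
  rw [h1]
  simpa using encard_finset_biUnion_le Finset.univ f c (fun i _ => h i)

section Construction

variable (M : KModel) (w₀ : M.W) (a₀ : M.D) (m : ℕ) (φ : Fml) (S : M.W → Fml → Set M.D)

/-- Paths from `w₀`, stored in reverse: head = current world, last entry = `w₀`. -/
def Wt : Type :=
  {l : List M.W // l.Chain' (fun a b => M.R b a) ∧ l.getLast? = some w₀ ∧ l.length ≤ m + 1}

def Rt (p q : Wt M w₀ m) : Prop := ∃ v, q.1 = v :: p.1

/-- The current (last) world of a path. -/
def lastW (p : Wt M w₀ m) : M.W := p.1.headD w₀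

/-- The selected small domain at a path. -/
def domt (p : Wt M w₀ m) : Set M.D :=
  insert a₀ (⋃ i : Fin (m + 1), ⋃ ψ ∈ φ.sub, S (p.1.getD i w₀) ψ)

/-- The small tree model. -/
noncomputable def Mt : KModel where
  W := Wt M w₀ m
  R := Rt M w₀ m
  D := M.D
  Dne := ⟨a₀⟩
  dom := domt M w₀ a₀ m φ S
  domNe := fun p => ⟨a₀, Set.mem_insert _ _⟩
  I := fun p P => M.I (lastW M w₀ m p) P ∩ domt M w₀ a₀ m φ S p
  Isub := fun _ _ => Set.inter_subset_right

variable {M w₀ a₀ m φ S}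

lemma wt_ne_nil (p : Wt M w₀ m) : p.1 ≠ [] := by
  intro h
  have h2 := p.2.2.1
  rw [h] at h2
  simp at h2

lemma wt_length_pos (p : Wt M w₀ m) : 0 < p.1.length :=
  List.length_pos_iff.mpr (wt_ne_nil p)

lemma wt_getLast_eq (p : Wt M w₀ m) : p.1.getLast (wt_ne_nil p) = w₀ := by
  have h2 := p.2.2.1
  rw [List.getLast?_eq_getLast (wt_ne_nil p)] at h2
  exact Option.some_inj.mp h2

lemma w0_mem (p : Wt M w₀ m) : w₀ ∈ p.1 := by
  have h := List.getLast_mem (wt_ne_nil p)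
  rwa [wt_getLast_eq p] at h

lemma getD_mem (p : Wt M w₀ m) (i : ℕ) : p.1.getD i w₀ ∈ p.1 := by
  by_cases h : i < p.1.length
  · rw [List.getD_eq_getElem _ _ h]; exact List.getElem_mem h
  · rw [List.getD_eq_default _ _ (le_of_not_gt h)]; exact w0_mem p

lemma lastW_eq_getD (p : Wt M w₀ m) : lastW M w₀ m p = p.1.getD 0 w₀ := by
  obtain ⟨x, t, hx⟩ := List.exists_cons_of_ne_nil (wt_ne_nil p)
  simp [lastW, hx]

lemma getD_m_eq_w0 (p : Wt M w₀ m) : p.1.getD m w₀ = w₀ := by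
  by_cases h : p.1.length ≤ m
  · exact List.getD_eq_default _ _ h
  · have hlen : p.1.length = m + 1 := le_antisymm p.2.2.2 (by omega)
    rw [List.getD_eq_getElem _ _ (by omega)]
    have h4 := wt_getLast_eq p
    rw [List.getLast_eq_getElem] at h4
    convert h4 using 2
    omega

/-- Walking along a (reversed) chain: every member reaches the head. -/
lemma mem_reflTransGen {u : M.W} :
    ∀ l : List M.W, l.Chain' (fun a b => M.R b a) → u ∈ l → ∀ d,
      Relation.ReflTransGen M.R u (l.headD d) := by
  intro l
  induction l with
  | nil => intro _ hu; simp at hu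
  | cons x t ih =>
      intro hc hu d
      rcases List.mem_cons.mp hu with rfl | hu
      · exact Relation.ReflTransGen.refl
      · cases t with
        | nil => simp at hu
        | cons y t' =>
            unfold List.Chain' at hc; rw [List.isChain_cons_cons] at hc
            exact Relation.ReflTransGen.tail (ih hc.2 hu d) hc.1

lemma dom_mono_rtg (hexp : M.expDom) {u v : M.W} (h : Relation.ReflTransGen M.R u v) :
    M.dom u ⊆ M.dom v := by
  induction h with
  | refl => exact subset_rfl
  | tail _ hbc ih => exact ih.trans (hexp _ _ hbc)

lemma rtg_to_last (hexp : M.expDom) (p : Wt M w₀ m) {u : M.W} (hu : u ∈ p.1) :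
    M.dom u ⊆ M.dom (lastW M w₀ m p) :=
  dom_mono_rtg hexp (mem_reflTransGen p.1 p.2.1 hu w₀)

lemma domt_subset (hexp : M.expDom) (ha₀ : a₀ ∈ M.dom w₀)
    (hS1 : ∀ u ψ, S u ψ ⊆ {b | b ∈ M.dom u ∧ M.sat ψ u b}) (p : Wt M w₀ m) :
    domt M w₀ a₀ m φ S p ⊆ M.dom (lastW M w₀ m p) := by
  intro x hx
  rcases Set.mem_insert_iff.mp hx with rfl | hx
  · exact rtg_to_last hexp p (w0_mem p) ha₀
  · simp only [Set.mem_iUnion] at hx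
    obtain ⟨i, ψ, hψ, hx⟩ := hx
    exact rtg_to_last hexp p (getD_mem p i) (hS1 _ _ hx).1

lemma domt_mono {p q : Wt M w₀ m} (h : Rt M w₀ m p q) :
    domt M w₀ a₀ m φ S p ⊆ domt M w₀ a₀ m φ S q := by
  obtain ⟨v, hv⟩ := h
  apply Set.insert_subset_insert
  intro x hx
  simp only [Set.mem_iUnion] at hx ⊢
  obtain ⟨i, ψ, hψ, hx⟩ := hx
  by_cases hi : (i : ℕ) < p.1.length
  · have hlen : p.1.length ≤ m := by
      have h2 := q.2.2.2
      rw [hv] at h2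
      simp only [List.length_cons] at h2
      omega
    refine ⟨⟨(i : ℕ) + 1, by omega⟩, ψ, hψ, ?_⟩
    rw [hv]
    simpa [List.getD_cons_succ] using hx
  · rw [List.getD_eq_default _ _ (le_of_not_gt hi)] at hx
    refine ⟨⟨m, by omega⟩, ψ, hψ, ?_⟩
    rw [getD_m_eq_w0 q]
    exact hx

lemma S_last_subset {ψ : Fml} (hψ : ψ ∈ φ.sub) (p : Wt M w₀ m) :
    S (lastW M w₀ m p) ψ ⊆ domt M w₀ a₀ m φ S p := by
  intro x hx
  apply Set.mem_insert_iff.mpr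
  right
  simp only [Set.mem_iUnion]
  refine ⟨⟨0, by omega⟩, ψ, hψ, ?_⟩
  rwa [← lastW_eq_getD p]

lemma Rt_R {p q : Wt M w₀ m} (h : Rt M w₀ m p q) :
    M.R (lastW M w₀ m p) (lastW M w₀ m q) := by
  obtain ⟨v, hv⟩ := h
  have hc := q.2.1
  rw [hv] at hc
  obtain ⟨x, t, hx⟩ := List.exists_cons_of_ne_nil (wt_ne_nil p)
  rw [hx] at hc
  unfold List.Chain' at hc; rw [List.isChain_cons_cons] at hc
  have h1 : lastW M w₀ m q = v := by simp [lastW, hv]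
  have h2 : lastW M w₀ m p = x := by simp [lastW, hx]
  rw [h1, h2]
  exact hc.1

lemma exists_succ (p : Wt M w₀ m) (hlen : p.1.length ≤ m) {v : M.W}
    (hR : M.R (lastW M w₀ m p) v) : ∃ q : Wt M w₀ m, q.1 = v :: p.1 := by
  obtain ⟨x, t, hx⟩ := List.exists_cons_of_ne_nil (wt_ne_nil p)
  have hlx : lastW M w₀ m p = x := by simp [lastW, hx]
  refine ⟨⟨v :: p.1, ?_, ?_, ?_⟩, rfl⟩
  · unfold List.Chain'; rw [List.isChain_cons]
    refine ⟨?_, p.2.1⟩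
    intro y hy
    rw [hx] at hy
    simp only [List.head?_cons, Option.mem_def, Option.some_inj] at hy
    subst hy
    rw [← hlx]
    exact hR
  · rw [hx, List.getLast?_cons_cons, ← hx]
    exact p.2.2.1
  · simp only [List.length_cons]
    omega

def root : Wt M w₀ m := ⟨[w₀], List.isChain_singleton _, by simp, by simp⟩

lemma root_val : (root : Wt M w₀ m).1 = [w₀] := rfl

lemma eq_root_of_len_one (v : Wt M w₀ m) (h : v.1.length = 1) : v = root := by
  obtain ⟨x, t, hx⟩ := List.exists_cons_of_ne_nil (wt_ne_nil v)
  have ht : t = [] := by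
    rw [hx] at h
    simp only [List.length_cons] at h
    exact List.eq_nil_of_length_eq_zero (by omega)
  subst ht
  have hw : x = w₀ := by
    have h2 := v.2.2.1
    rw [hx] at h2
    simp at h2
    exact h2
  apply Subtype.ext
  rw [hx, hw]
  rfl

lemma exists_parent (v : Wt M w₀ m) {x y : M.W} {t : List M.W} (h : v.1 = x :: y :: t) :
    ∃ u : Wt M w₀ m, u.1 = y :: t ∧ Rt M w₀ m u v := by
  have hc : (y :: t).Chain' (fun a b => M.R b a) := by
    have := v.2.1
    rw [h] at this
    exact (List.isChain_cons_cons.mp this).2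
  have hl : (y :: t).getLast? = some w₀ := by
    have h2 := v.2.2.1
    rw [h, List.getLast?_cons_cons] at h2
    exact h2
  have hlen : (y :: t).length ≤ m + 1 := by
    have h2 := v.2.2.2
    rw [h] at h2
    simp only [List.length_cons] at h2 ⊢
    omega
  exact ⟨⟨y :: t, hc, hl, hlen⟩, rfl, ⟨x, h⟩⟩

lemma root_reaches : ∀ v : Wt M w₀ m, Relation.ReflTransGen (Rt M w₀ m) root v := by
  have key : ∀ n : ℕ, ∀ v : Wt M w₀ m, v.1.length ≤ n →
      Relation.ReflTransGen (Rt M w₀ m) root v := by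
    intro n
    induction n with
    | zero => intro v hv; exact absurd hv (by have := wt_length_pos v; omega)
    | succ n ih =>
        intro v hv
        obtain ⟨x, t, hx⟩ := List.exists_cons_of_ne_nil (wt_ne_nil v)
        cases t with
        | nil =>
            rw [eq_root_of_len_one v (by rw [hx]; rfl)]
        | cons y t' =>
            obtain ⟨u, hu, hRuv⟩ := exists_parent v hx
            have hlu : u.1.length ≤ n := by
              rw [hu]
              rw [hx] at hv
              simp only [List.length_cons] at hv ⊢
              omega
            exact Relation.ReflTransGen.tail (ih u hlu) hRuv
  intro v
  exact key v.1.length v le_rfl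

lemma tree_structure : IsTreeOfDepth (Rt M w₀ m) (root : Wt M w₀ m) m := by
  refine ⟨fun p => p.1.length - 1, by simp [root], ?_, ?_, ?_, root_reaches⟩
  · intro p
    show p.1.length - 1 ≤ m
    have := p.2.2.2
    omega
  · intro u v huv
    obtain ⟨x, hx⟩ := huv
    show v.1.length - 1 = u.1.length - 1 + 1
    rw [hx]
    have := wt_length_pos u
    simp only [List.length_cons]
    omega
  · intro v hv
    obtain ⟨x, t, hx⟩ := List.exists_cons_of_ne_nil (wt_ne_nil v)
    cases t with
    | nil => exact absurd (eq_root_of_len_one v (by rw [hx]; rfl)) hv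
    | cons y t' =>
        obtain ⟨u, hu, hRuv⟩ := exists_parent v hx
        refine ⟨u, hRuv, ?_⟩
        intro u' hu'
        obtain ⟨x', hx'⟩ := hu'
        apply Subtype.ext
        rw [hu]
        have h5 : x' :: u'.1 = x :: y :: t' := by rw [← hx', hx]
        injection h5 with _ h7

/-- The truth lemma. -/
lemma truth (hexp : M.expDom) (ha₀ : a₀ ∈ M.dom w₀)
    (hS1 : ∀ u ψ, S u ψ ⊆ {b | b ∈ M.dom u ∧ M.sat ψ u b})
    (hS2 : ∀ u ψ, (S u ψ).encard
      = min {b | b ∈ M.dom u ∧ M.sat ψ u b}.encard ((φ.cpt : ℕ∞) + 1)) :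
    ∀ ψ : Fml, ψ ∈ φ.sub → ∀ p : Wt M w₀ m, ψ.md + (p.1.length - 1) ≤ m →
      ∀ a ∈ domt M w₀ a₀ m φ S p,
      ((Mt M w₀ a₀ m φ S).sat ψ p a ↔ M.sat ψ (lastW M w₀ m p) a) := by
  intro ψ
  induction ψ with
  | atom P =>
      intro _ p _ a ha
      show a ∈ M.I (lastW M w₀ m p) P ∩ domt M w₀ a₀ m φ S p ↔ a ∈ M.I (lastW M w₀ m p) P
      exact ⟨fun h => h.1, fun h => ⟨h, ha⟩⟩
  | neg χ ih =>
      intro hmem p hd a ha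
      have hχ : χ ∈ φ.sub := sub_subset φ hmem (Finset.mem_insert_of_mem (mem_sub_self χ))
      show ¬ (Mt M w₀ a₀ m φ S).sat χ p a ↔ ¬ M.sat χ (lastW M w₀ m p) a
      rw [ih hχ p (by simpa [Fml.md] using hd) a ha]
  | conj χ₁ χ₂ ih₁ ih₂ =>
      intro hmem p hd a ha
      have h1 : χ₁ ∈ φ.sub := sub_subset φ hmem
        (Finset.mem_insert_of_mem (Finset.mem_union_left _ (mem_sub_self χ₁)))
      have h2 : χ₂ ∈ φ.sub := sub_subset φ hmem
        (Finset.mem_insert_of_mem (Finset.mem_union_right _ (mem_sub_self χ₂)))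
      have hd' : max χ₁.md χ₂.md + (p.1.length - 1) ≤ m := by simpa [Fml.md] using hd
      show ((Mt M w₀ a₀ m φ S).sat χ₁ p a ∧ (Mt M w₀ a₀ m φ S).sat χ₂ p a) ↔ _
      rw [ih₁ h1 p (by omega) a ha, ih₂ h2 p (by omega) a ha]
      rfl
  | dia χ ih =>
      intro hmem p hd a ha
      have hχ : χ ∈ φ.sub := sub_subset φ hmem (Finset.mem_insert_of_mem (mem_sub_self χ))
      have hd' : χ.md + 1 + (p.1.length - 1) ≤ m := by simpa [Fml.md] using hd
      have hpos := wt_length_pos p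
      have hlen : p.1.length ≤ m := by omega
      show (∃ q, Rt M w₀ m p q ∧ (Mt M w₀ a₀ m φ S).sat χ q a) ↔
        (∃ v, M.R (lastW M w₀ m p) v ∧ M.sat χ v a)
      constructor
      · rintro ⟨q, hq, hs⟩
        have haq : a ∈ domt M w₀ a₀ m φ S q := domt_mono hq ha
        have hdq : χ.md + (q.1.length - 1) ≤ m := by
          obtain ⟨v, hv⟩ := hq
          rw [hv]
          simp only [List.length_cons]
          omega
        exact ⟨lastW M w₀ m q, Rt_R hq, (ih hχ q hdq a haq).mp hs⟩
      · rintro ⟨v, hRv, hs⟩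
        obtain ⟨q, hq⟩ := exists_succ p hlen hRv
        have hq' : Rt M w₀ m p q := ⟨v, hq⟩
        have hdq : χ.md + (q.1.length - 1) ≤ m := by
          rw [hq]
          simp only [List.length_cons]
          omega
        have hlq : lastW M w₀ m q = v := by simp [lastW, hq]
        refine ⟨q, hq', (ih hχ q hdq a (domt_mono hq' ha)).mpr ?_⟩
        rw [hlq]
        exact hs
  | countLe c χ ih =>
      intro hmem p hd a ha
      have hχ : χ ∈ φ.sub := sub_subset φ hmem (Finset.mem_insert_of_mem (mem_sub_self χ))
      have hc : c ≤ φ.cpt := by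
        have h9 := cpt_le_of_mem_sub φ hmem
        simp only [Fml.cpt] at h9
        exact le_trans (le_max_left _ _) h9
      have hd' : χ.md + (p.1.length - 1) ≤ m := by simpa [Fml.md] using hd
      show {b | b ∈ domt M w₀ a₀ m φ S p ∧ (Mt M w₀ a₀ m φ S).sat χ p b}.encard ≤ (c : ℕ∞) ↔
        {b | b ∈ M.dom (lastW M w₀ m p) ∧ M.sat χ (lastW M w₀ m p) b}.encard ≤ (c : ℕ∞)
      set A := {b | b ∈ M.dom (lastW M w₀ m p) ∧ M.sat χ (lastW M w₀ m p) b} with hA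
      have hset : {b | b ∈ domt M w₀ a₀ m φ S p ∧ (Mt M w₀ a₀ m φ S).sat χ p b}
          = A ∩ domt M w₀ a₀ m φ S p := by
        ext b
        simp only [Set.mem_setOf_eq, Set.mem_inter_iff, hA]
        constructor
        · rintro ⟨hb, hs⟩
          exact ⟨⟨domt_subset hexp ha₀ hS1 p hb, (ih hχ p hd' b hb).mp hs⟩, hb⟩
        · rintro ⟨⟨_, hs⟩, hb⟩
          exact ⟨hb, (ih hχ p hd' b hb).mpr hs⟩
      rw [hset]
      by_cases hAc : A.encard ≤ (c : ℕ∞)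
      · simp only [hAc, iff_true]
        exact le_trans (Set.encard_mono Set.inter_subset_left) hAc
      · simp only [hAc, iff_false]
        intro hcon
        have h1 : (c : ℕ∞) + 1 ≤ A.encard := Order.add_one_le_of_lt (not_le.mp hAc)
        have h2 : (c : ℕ∞) + 1 ≤ (S (lastW M w₀ m p) χ).encard := by
          rw [hS2]
          refine le_min h1 ?_
          have : (c : ℕ) + 1 ≤ φ.cpt + 1 := by omega
          exact_mod_cast this
        have h3 : S (lastW M w₀ m p) χ ⊆ A ∩ domt M w₀ a₀ m φ S p :=
          Set.subset_inter (hS1 _ _) (S_last_subset hχ p)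
        have h4 : (c : ℕ∞) + 1 ≤ (c : ℕ∞) :=
          le_trans (le_trans h2 (Set.encard_mono h3)) hcon
        have h5 : (c : ℕ) + 1 ≤ c := by exact_mod_cast h4
        omega

lemma encard_domt (hS : ∀ u ψ, (S u ψ).encard ≤ (φ.cpt : ℕ∞) + 1) (p : Wt M w₀ m) :
    (domt M w₀ a₀ m φ S p).encard
      ≤ ((m : ℕ∞) + 1) * ((φ.sub.card : ℕ∞) * ((φ.cpt : ℕ∞) + 1)) + 1 := by
  refine le_trans (Set.encard_insert_le _ _) (add_le_add ?_ le_rfl)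
  have h1 : (⋃ i : Fin (m + 1), ⋃ ψ ∈ φ.sub, S (p.1.getD i w₀) ψ).encard
      ≤ ((m + 1 : ℕ) : ℕ∞) * ((φ.sub.card : ℕ∞) * ((φ.cpt : ℕ∞) + 1)) := by
    apply encard_iUnion_fin_le
    intro i
    exact encard_finset_biUnion_le _ _ _ (fun ψ _ => hS _ ψ)
  refine le_trans h1 (le_of_eq ?_)
  push_cast
  ring

end Construction

end Stmt9Aux
/-- polynomial-size domain property over expanding domains: if φ is
satisfiable with respect to QK^exp, then it is satisfiable in an expanding domain
tree-model of depth ≤ md(φ) in which every domain has at most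
`|sub(φ)|·(md(φ)+1)·(cpt(φ)+1) + 1` elements. -/

theorem stmt_9 (φ : Fml) (h : satQKexp φ) :
    ∃ (M : KModel) (root : M.W), M.expDom ∧ IsTreeOfDepth M.R root φ.md ∧
      (∀ w, (M.dom w).encard ≤
        ((φ.sub.card * (φ.md + 1) * (φ.cpt + 1) + 1 : ℕ) : ℕ∞)) ∧
      ∃ w a, a ∈ M.dom w ∧ M.sat φ w a := by
  classical
  obtain ⟨M, hexp, w₀, a₀, ha₀, hsat⟩ := h
  have hwit : ∀ (u : M.W) (ψ : Fml), ∃ t,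
      t ⊆ {b | b ∈ M.dom u ∧ M.sat ψ u b} ∧
      t.encard = min {b | b ∈ M.dom u ∧ M.sat ψ u b}.encard ((φ.cpt : ℕ∞) + 1) :=
    fun u ψ => Set.exists_subset_encard_eq (min_le_left _ _)
  choose S hS1 hS2 using hwit
  refine ⟨Stmt9Aux.Mt M w₀ a₀ φ.md φ S, Stmt9Aux.root, ?_, ?_, ?_, ?_⟩
  · intro p q hpq
    exact Stmt9Aux.domt_mono hpq
  · exact Stmt9Aux.tree_structure
  · intro p
    refine le_trans (Stmt9Aux.encard_domt (fun u ψ => by rw [hS2]; exact min_le_right _ _) p)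
      (le_of_eq ?_)
    push_cast
    ring
  · refine ⟨Stmt9Aux.root, a₀, Set.mem_insert _ _, ?_⟩
    have h0 : ((Stmt9Aux.root : Stmt9Aux.Wt M w₀ φ.md)).1.length = 1 := rfl
    have h1 := (Stmt9Aux.truth hexp ha₀ hS1 hS2 φ (Stmt9Aux.mem_sub_self φ)
      (Stmt9Aux.root) (by rw [h0]; simp) a₀ (Set.mem_insert _ _)).mpr
    exact h1 hsat
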